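/- Let n, m be positive natural numbers, let M be an n×n real symmetric positive definite matrix, let D be an n×n real matrix and C an n×m real matrix such that D·M⁻¹ + M⁻¹·Dᵀ + C·Cᵀ = 0, and let γ ≥ 0 be real. Then for every x ∈ ℝⁿ, (1/2)·xᵀ(M⁻¹Dᵀ + DM⁻¹)x − γ·xᵀM⁻¹x + (1/2)·trace(M⁻¹·C·Cᵀ) ≤ −(λ₁/2 + γ/λ_max(M))·|x|² + (1/(2·λ_min(M)))·trace(C·Cᵀ), where λ₁ denotes the smallest eigenvalue of the symmetric positive semidefinite matrix C·Cᵀ, λ_max(M) and λ_min(M) denote the largest and smallest eigenvalues of M, and |x| is the Euclidean norm. -/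

import Mathlib

open Matrix

section helpers

variable {n : ℕ}

/-- Quadratic form representation via eigenvalues. -/
lemma quad_repr {A : Matrix (Fin n) (Fin n) ℝ} (hA : A.IsHermitian) (x : Fin n → ℝ) :
    ∃ y : Fin n → ℝ, (∑ i, y i ^ 2 = ∑ i, x i ^ 2) ∧
      x ⬝ᵥ (A *ᵥ x) = ∑ i, hA.eigenvalues i * y i ^ 2 := by
  set U : Matrix (Fin n) (Fin n) ℝ := (hA.eigenvectorUnitary : Matrix (Fin n) (Fin n) ℝ) with hUdef
  have hU2 : U * star U = 1 := Unitary.coe_mul_star_self _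
  have hstar : star U = Uᵀ := by
    rw [Matrix.star_eq_conjTranspose, Matrix.conjTranspose_eq_transpose_of_trivial]
  refine ⟨star U *ᵥ x, ?_, ?_⟩
  · have h1 : (star U *ᵥ x) ⬝ᵥ (star U *ᵥ x) = x ⬝ᵥ x := by
      rw [dotProduct_mulVec, hstar, vecMul_transpose, mulVec_mulVec, hstar.symm, hU2, one_mulVec]
    have h2 : ∀ z : Fin n → ℝ, z ⬝ᵥ z = ∑ i, z i ^ 2 := by
      intro z; simp [dotProduct, sq]
    rw [← h2, ← h2, h1]
  · conv_lhs => rw [hA.spectral_theorem, Unitary.conjStarAlgAut_apply]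
    have hdiag : Matrix.diagonal (RCLike.ofReal ∘ hA.eigenvalues) =
        Matrix.diagonal hA.eigenvalues := by
      congr 1
    rw [hdiag, ← Matrix.mulVec_mulVec, ← Matrix.mulVec_mulVec, dotProduct_mulVec,
      ← mulVec_transpose]
    rw [show Uᵀ *ᵥ x = star U *ᵥ x by rw [hstar]]
    set y : Fin n → ℝ := star U *ᵥ x
    simp [Matrix.mulVec_diagonal, dotProduct, sq]
    ring_nf
    exact Finset.sum_congr rfl fun i _ => by ring

lemma quad_lower {A : Matrix (Fin n) (Fin n) ℝ} (hA : A.IsHermitian) (x : Fin n → ℝ)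
    {c : ℝ} (hc : ∀ i, c ≤ hA.eigenvalues i) :
    c * (∑ i, x i ^ 2) ≤ x ⬝ᵥ (A *ᵥ x) := by
  obtain ⟨y, hy, hrep⟩ := quad_repr hA x
  rw [hrep, ← hy, Finset.mul_sum]
  exact Finset.sum_le_sum fun i _ => mul_le_mul_of_nonneg_right (hc i) (sq_nonneg _)

lemma quad_upper {A : Matrix (Fin n) (Fin n) ℝ} (hA : A.IsHermitian) (x : Fin n → ℝ)
    {c : ℝ} (hc : ∀ i, hA.eigenvalues i ≤ c) :
    x ⬝ᵥ (A *ᵥ x) ≤ c * (∑ i, x i ^ 2) := by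
  obtain ⟨y, hy, hrep⟩ := quad_repr hA x
  rw [hrep, ← hy, Finset.mul_sum]
  exact Finset.sum_le_sum fun i _ => mul_le_mul_of_nonneg_right (hc i) (sq_nonneg _)

end helpers

theorem closed_loop_generator_estimate (n m : ℕ) (hn : 0 < n) (hm : 0 < m)
    (M D : Matrix (Fin n) (Fin n) ℝ) (C : Matrix (Fin n) (Fin m) ℝ)
    (hMsymm : M.IsSymm) (hMpd : M.PosDef)
    (hLyap : D * M⁻¹ + M⁻¹ * Dᵀ + C * Cᵀ = 0)
    (γ : ℝ) (hγ : 0 ≤ γ)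
    (lam1 lamMax lamMin : ℝ)
    (hlam1 : lam1 = sInf (spectrum ℝ (C * Cᵀ)))
    (hlamMax : lamMax = sSup (spectrum ℝ M))
    (hlamMin : lamMin = sInf (spectrum ℝ M))
    (x : Fin n → ℝ) :
    (1 / 2) * (x ⬝ᵥ ((M⁻¹ * Dᵀ + D * M⁻¹) *ᵥ x)) - γ * (x ⬝ᵥ (M⁻¹ *ᵥ x))
        + (1 / 2) * (M⁻¹ * C * Cᵀ).trace
      ≤ -(lam1 / 2 + γ / lamMax) * (∑ i, x i ^ 2)
        + (1 / (2 * lamMin)) * (C * Cᵀ).trace := by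
  have hCT : Cᵀ = Cᴴ := (Matrix.conjTranspose_eq_transpose_of_trivial C).symm
  -- A := C * Cᵀ is PSD
  have hApsd : (C * Cᵀ).PosSemidef := by
    rw [hCT]; exact Matrix.posSemidef_self_mul_conjTranspose C
  have hAH : (C * Cᵀ).IsHermitian := hApsd.1
  have hMH : M.IsHermitian := hMpd.1
  -- spectra as ranges of eigenvalues
  have hspecA : spectrum ℝ (C * Cᵀ) = Set.range hAH.eigenvalues :=
    Matrix.IsHermitian.spectrum_real_eq_range_eigenvalues hAH
  have hspecM : spectrum ℝ M = Set.range hMH.eigenvalues :=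
    Matrix.IsHermitian.spectrum_real_eq_range_eigenvalues hMH
  -- lam1 ≤ eigenvalues of C*Cᵀ
  have hlam1le : ∀ i, lam1 ≤ hAH.eigenvalues i := by
    intro i
    rw [hlam1, hspecA]
    exact csInf_le (Set.finite_range _).bddBelow ⟨i, rfl⟩
  -- lamMin, lamMax facts
  have hMeigpos : ∀ i, 0 < hMH.eigenvalues i := fun i => hMpd.eigenvalues_pos i
  haveI : Nonempty (Fin n) := ⟨⟨0, hn⟩⟩
  have hlamMin_mem : lamMin ∈ Set.range hMH.eigenvalues := by
    rw [hlamMin, hspecM]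
    exact (Set.range_nonempty _).csInf_mem (Set.finite_range _)
  have hlamMinpos : 0 < lamMin := by obtain ⟨i, hi⟩ := hlamMin_mem; exact hi ▸ hMeigpos i
  have hlamMax_mem : lamMax ∈ Set.range hMH.eigenvalues := by
    rw [hlamMax, hspecM]
    exact (Set.range_nonempty _).csSup_mem (Set.finite_range _)
  have hlamMaxpos : 0 < lamMax := by obtain ⟨i, hi⟩ := hlamMax_mem; exact hi ▸ hMeigpos i
  have hlamMinle : ∀ μ ∈ spectrum ℝ M, lamMin ≤ μ := by
    intro μ hμ
    rw [hlamMin]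
    exact csInf_le (hspecM ▸ (Set.finite_range _).bddBelow) hμ
  have hlamMaxge : ∀ μ ∈ spectrum ℝ M, μ ≤ lamMax := by
    intro μ hμ
    rw [hlamMax]
    exact le_csSup (hspecM ▸ (Set.finite_range _).bddAbove) hμ
  -- M⁻¹ facts
  have hMipd : (M⁻¹).PosDef := hMpd.inv
  have hMiH : (M⁻¹).IsHermitian := hMipd.1
  have hMieigpos : ∀ i, 0 < hMiH.eigenvalues i := fun i => hMipd.eigenvalues_pos i
  -- eigenvalues of M⁻¹ relate to spectrum of M
  have hMunit : IsUnit M := M.isUnit_iff_isUnit_det.mpr (isUnit_iff_ne_zero.mpr hMpd.det_pos.ne')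
  obtain ⟨u, hu⟩ := hMunit
  have hinv_spec : ∀ ν : ℝ, ν ≠ 0 → ν ∈ spectrum ℝ (M⁻¹) → ν⁻¹ ∈ spectrum ℝ M := by
    intro ν hν hmem
    have hMinv : M⁻¹ = (↑u⁻¹ : Matrix (Fin n) (Fin n) ℝ) := by
      rw [Matrix.nonsing_inv_eq_ringInverse, ← hu, Ring.inverse_unit]
    set r : ℝˣ := Units.mk0 ν hν with hr
    have : ((r⁻¹ : ℝˣ) : ℝ) ∈ spectrum ℝ (↑u : Matrix (Fin n) (Fin n) ℝ) := by
      rw [spectrum.inv_mem_iff]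
      simpa [hr, ← hMinv] using hmem
    simpa [hr, hu] using this
  have hMi_upper : ∀ i, hMiH.eigenvalues i ≤ 1 / lamMin := by
    intro i
    have hν := hMieigpos i
    have hmem : (hMiH.eigenvalues i)⁻¹ ∈ spectrum ℝ M :=
      hinv_spec _ hν.ne' (hMiH.eigenvalues_mem_spectrum_real i)
    have := hlamMinle _ hmem
    rw [one_div]
    calc hMiH.eigenvalues i = ((hMiH.eigenvalues i)⁻¹)⁻¹ := (inv_inv _).symm
      _ ≤ lamMin⁻¹ := by
          apply inv_anti₀ hlamMinpos this
  have hMi_lower : ∀ i, 1 / lamMax ≤ hMiH.eigenvalues i := by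
    intro i
    have hν := hMieigpos i
    have hmem : (hMiH.eigenvalues i)⁻¹ ∈ spectrum ℝ M :=
      hinv_spec _ hν.ne' (hMiH.eigenvalues_mem_spectrum_real i)
    have := hlamMaxge _ hmem
    rw [one_div]
    calc lamMax⁻¹ ≤ ((hMiH.eigenvalues i)⁻¹)⁻¹ := by
          apply inv_anti₀ (inv_pos.mpr hν) this
      _ = hMiH.eigenvalues i := inv_inv _
  -- rewrite the drift term
  have hdrift : M⁻¹ * Dᵀ + D * M⁻¹ = -(C * Cᵀ) := by
    have h := hLyap
    rw [add_comm (D * M⁻¹) (M⁻¹ * Dᵀ)] at h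
    exact eq_neg_of_add_eq_zero_left h
  -- bound 1
  have h1 : lam1 * (∑ i, x i ^ 2) ≤ x ⬝ᵥ ((C * Cᵀ) *ᵥ x) := quad_lower hAH x hlam1le
  -- bound 2
  have h2 : (1 / lamMax) * (∑ i, x i ^ 2) ≤ x ⬝ᵥ (M⁻¹ *ᵥ x) := quad_lower hMiH x hMi_lower
  -- bound 3 : trace
  have h3 : (M⁻¹ * C * Cᵀ).trace ≤ (1 / lamMin) * (C * Cᵀ).trace := by
    have htr1 : (M⁻¹ * C * Cᵀ).trace
        = ∑ j, (fun i => C i j) ⬝ᵥ (M⁻¹ *ᵥ fun i => C i j) := by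
      rw [Matrix.trace_mul_comm]
      simp only [Matrix.trace, Matrix.diag, Matrix.mul_apply, Matrix.transpose_apply,
        Matrix.mulVec, dotProduct]
    have htr2 : (C * Cᵀ).trace = ∑ j, ∑ i, C i j ^ 2 := by
      simp only [Matrix.trace, Matrix.diag, Matrix.mul_apply, Matrix.transpose_apply, sq]
      rw [Finset.sum_comm]
    rw [htr1, htr2, Finset.mul_sum]
    refine Finset.sum_le_sum fun j _ => quad_upper hMiH _ hMi_upper
  -- assemble
  rw [hdrift]
  have hneg : x ⬝ᵥ ((-(C * Cᵀ)) *ᵥ x) = -(x ⬝ᵥ ((C * Cᵀ) *ᵥ x)) := by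
    rw [Matrix.neg_mulVec, dotProduct_neg]
  rw [hneg]
  have hS : (0:ℝ) ≤ ∑ i, x i ^ 2 := Finset.sum_nonneg fun i _ => sq_nonneg _
  have h2' : γ * ((1 / lamMax) * (∑ i, x i ^ 2)) ≤ γ * (x ⬝ᵥ (M⁻¹ *ᵥ x)) :=
    mul_le_mul_of_nonneg_left h2 hγ
  have e1 : γ / lamMax * (∑ i, x i ^ 2) = γ * ((1 / lamMax) * (∑ i, x i ^ 2)) := by ring
  have e2 : (1 / (2 * lamMin)) * (C * Cᵀ).trace = (1/2) * ((1 / lamMin) * (C * Cᵀ).trace) := by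
    ring
  nlinarith [h1, h2', h3]
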